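/- For all natural numbers r, s with 0 ≤ r ≤ α² − 1, 0 ≤ s ≤ β² − 1 and (r, s) ≠ (0, 0), the set {(r + s·α² + k·α²·β² : ZMod n) : 0 ≤ k ≤ γ² − 1} contains exactly one element of the set A = {(k·γ² : ZMod n) : 1 ≤ k ≤ α²·β² − 1}. -/
import Mathlib

private lemma key_inter (a b c r s : ℕ) (hapos : 0 < a) (hbpos : 0 < b) (hcpos : 0 < c)
    (hcop : Nat.Coprime c (a * b)) (hr : r ≤ a - 1) (hs : s ≤ b - 1)
    (hrs : ¬(r = 0 ∧ s = 0)) :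
    ({z : ZMod (a * b * c) | ∃ k : ℕ, k ≤ c - 1 ∧
        z = ((r + s * a + k * a * b : ℕ) : ZMod (a * b * c))} ∩
      {z : ZMod (a * b * c) | ∃ k : ℕ, 1 ≤ k ∧ k ≤ a * b - 1 ∧
        z = ((k * c : ℕ) : ZMod (a * b * c))}).ncard = 1 := by
  have habpos : 0 < a * b := Nat.mul_pos hapos hbpos
  have hnpos : 0 < a * b * c := Nat.mul_pos habpos hcpos
  haveI : NeZero (a * b * c) := ⟨hnpos.ne'⟩
  haveI : NeZero (a * b) := ⟨habpos.ne'⟩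
  -- basic bounds on x = r + s * a
  have hx0 : 0 < r + s * a := by
    rcases Nat.eq_zero_or_pos s with h | h
    · subst h; simp only [Nat.zero_mul]; omega
    · have : 0 < s * a := Nat.mul_pos h hapos
      omega
  have hxlt : r + s * a < a * b := by
    have h1 : (s + 1) * a ≤ b * a := Nat.mul_le_mul_right a (by omega)
    have h2 : (s + 1) * a = s * a + a := by ring
    have h3 : b * a = a * b := Nat.mul_comm b a
    omega
  -- the unit c in ZMod (a*b) and the distinguished m₀
  have hcu : IsUnit ((c : ℕ) : ZMod (a * b)) := by
    rw [ZMod.isUnit_iff_coprime]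
    exact hcop
  set u : ZMod (a * b) := ((c : ℕ) : ZMod (a * b))⁻¹ * ((r + s * a : ℕ) : ZMod (a * b)) with hu
  set m₀ := u.val with hm₀def
  have hm₀lt : m₀ < a * b := ZMod.val_lt u
  have hkey : ((m₀ * c : ℕ) : ZMod (a * b)) = ((r + s * a : ℕ) : ZMod (a * b)) := by
    rw [Nat.cast_mul, hm₀def, ZMod.natCast_val, ZMod.cast_id, hu]
    have hone : ((c : ℕ) : ZMod (a * b)) * ((c : ℕ) : ZMod (a * b))⁻¹ = 1 :=
      ZMod.mul_inv_of_unit _ hcu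
    have hring : ∀ x : ZMod (a * b),
        ((c : ℕ) : ZMod (a * b))⁻¹ * x * ((c : ℕ) : ZMod (a * b)) =
          ((c : ℕ) : ZMod (a * b)) * ((c : ℕ) : ZMod (a * b))⁻¹ * x := by
      intro x; ring
    rw [hring, hone, one_mul]
  clear_value m₀
  clear hm₀def
  have hmod : m₀ * c ≡ r + s * a [MOD a * b] := (ZMod.natCast_eq_natCast_iff _ _ _).mp hkey
  have hm₀ne : m₀ ≠ 0 := by
    intro h
    rw [h] at hkey
    simp only [Nat.zero_mul, Nat.cast_zero] at hkey
    have hd : (a * b) ∣ (r + s * a) := (ZMod.natCast_eq_zero_iff _ _).mp hkey.symm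
    have := Nat.le_of_dvd hx0 hd
    omega
  have hge : r + s * a ≤ m₀ * c := by
    by_contra h
    push_neg at h
    have h1 : m₀ * c % (a * b) = (r + s * a) % (a * b) := hmod
    rw [Nat.mod_eq_of_lt (by omega), Nat.mod_eq_of_lt hxlt] at h1
    omega
  obtain ⟨k₀, hk₀⟩ := (Nat.modEq_iff_dvd' hge).mp hmod.symm
  have heq : r + s * a + k₀ * (a * b) = m₀ * c := by
    rw [(Nat.sub_eq_iff_eq_add hge).mp hk₀]; ring
  have hk₀lt : k₀ < c := by
    have h1 : m₀ * c < (a * b) * c := mul_lt_mul_of_pos_right hm₀lt hcpos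
    have h2 : a * b * k₀ < a * b * c := by
      calc a * b * k₀ ≤ m₀ * c := by rw [← hk₀]; exact Nat.sub_le _ _
        _ < a * b * c := h1
    exact Nat.lt_of_mul_lt_mul_left h2
  apply Set.ncard_eq_one.mpr
  refine ⟨((m₀ * c : ℕ) : ZMod (a * b * c)), ?_⟩
  ext z
  simp only [Set.mem_inter_iff, Set.mem_setOf_eq, Set.mem_singleton_iff]
  constructor
  · rintro ⟨⟨k, hk, rfl⟩, ⟨m, hm1, hm2, hzm⟩⟩
    have hlt1 : r + s * a + k * a * b < a * b * c := by
      calc r + s * a + k * a * b = (r + s * a) + k * (a * b) := by ring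
        _ < a * b + k * (a * b) := Nat.add_lt_add_right hxlt _
        _ = (k + 1) * (a * b) := by ring
        _ ≤ c * (a * b) := Nat.mul_le_mul_right _ (by omega)
        _ = a * b * c := Nat.mul_comm _ _
    have hlt2 : m * c < a * b * c := by
      calc m * c ≤ (a * b - 1) * c := Nat.mul_le_mul_right _ hm2
        _ < (a * b) * c := mul_lt_mul_of_pos_right (by omega) hcpos
    have hnat : r + s * a + k * a * b = m * c := by
      have h := (ZMod.natCast_eq_natCast_iff _ _ _).mp hzm
      rw [Nat.ModEq, Nat.mod_eq_of_lt hlt1, Nat.mod_eq_of_lt hlt2] at h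
      exact h
    have hmmod : m * c ≡ r + s * a [MOD a * b] := by
      show m * c % (a * b) = (r + s * a) % (a * b)
      rw [← hnat, Nat.mul_assoc, Nat.add_mul_mod_self_right]
    have hmm₀ : m ≡ m₀ [MOD a * b] :=
      Nat.ModEq.cancel_right_of_coprime hcop.symm (hmmod.trans hmod.symm)
    have hmeq : m = m₀ := by
      have h1 : m % (a * b) = m₀ % (a * b) := hmm₀
      rw [Nat.mod_eq_of_lt (by omega), Nat.mod_eq_of_lt hm₀lt] at h1
      exact h1
    rw [hzm, hmeq]
  · rintro rfl
    constructor
    · refine ⟨k₀, by omega, ?_⟩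
      have h : r + s * a + k₀ * a * b = m₀ * c := by
        rw [Nat.mul_assoc]; exact heq
      rw [h]
    · exact ⟨m₀, by omega, by omega, rfl⟩

theorem stmt_3 (α β γ : ℕ) (hα : α.Prime) (hβ : β.Prime) (hγ : γ.Prime)
    (hαβ : α < β) (hβγ : β < γ) (r s : ℕ)
    (hr : r ≤ α ^ 2 - 1) (hs : s ≤ β ^ 2 - 1) (hrs : (r, s) ≠ (0, 0)) :
    ({z : ZMod (α ^ 2 * β ^ 2 * γ ^ 2) | ∃ k : ℕ, k ≤ γ ^ 2 - 1 ∧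
        z = ((r + s * α ^ 2 + k * α ^ 2 * β ^ 2 : ℕ) : ZMod (α ^ 2 * β ^ 2 * γ ^ 2))} ∩
      {z : ZMod (α ^ 2 * β ^ 2 * γ ^ 2) | ∃ k : ℕ, 1 ≤ k ∧ k ≤ α ^ 2 * β ^ 2 - 1 ∧
        z = ((k * γ ^ 2 : ℕ) : ZMod (α ^ 2 * β ^ 2 * γ ^ 2))}).ncard = 1 := by
  have hcop : Nat.Coprime (γ ^ 2) (α ^ 2 * β ^ 2) := by
    have h1 : Nat.Coprime γ α := (Nat.coprime_primes hγ hα).mpr (by omega)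
    have h2 : Nat.Coprime γ β := (Nat.coprime_primes hγ hβ).mpr (by omega)
    have h3 : Nat.Coprime (γ ^ 2) ((α * β) ^ 2) := (h1.mul_right h2).pow 2 2
    rwa [mul_pow] at h3
  have hrs' : ¬(r = 0 ∧ s = 0) := by
    intro h
    exact hrs (by simp [h.1, h.2])
  exact key_inter (α ^ 2) (β ^ 2) (γ ^ 2) r s (pow_pos hα.pos 2) (pow_pos hβ.pos 2)
    (pow_pos hγ.pos 2) hcop hr hs hrs'
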